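/- Let d ≥ 2 with d not congruent to 0 mod 4, let d̂ be the squarefree part of d (the product of the distinct prime divisors of d), let a be a nonzero element of F_q and b a d̂-th power in F_q^*. Then x^d - a is irreducible over F_q if and only if x^d - ab is irreducible over F_q. -/

import Mathlib

open Polynomial

/-- `iter f n` is the n-th iterate of `f` under composition, with `iter f 0 = X`. -/
noncomputable def iter {F : Type*} [Field F] (f : F[X]) : ℕ → F[X]
  | 0 => X
  | n + 1 => (iter f n).comp f

/-- `P d a n` is the value `P_n(a)` where `P_1(x) = x` and
`P_n(x) = P_{n-1}(x)^d + (-1)^(d-1) x` for `n ≥ 2`. (`P d a 0` is junk, set to `a`.) -/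
def P {F : Type*} [Field F] (d : ℕ) (a : F) : ℕ → F
  | 0 => a
  | 1 => a
  | n + 2 => (P d a (n + 1)) ^ d + (-1 : F) ^ (d - 1) * a

universe u

open IntermediateField in
theorem my_X_pow_sub_C_irreducible_of_not_four_dvd {K : Type u} [Field K]
    {n : ℕ} (hn : n ≠ 0) (h4 : ¬ (4 ∣ n)) {a : K}
    (ha : ∀ p : ℕ, p.Prime → p ∣ n → ∀ b : K, b ^ p ≠ a) :
    Irreducible (X ^ n - C a) := by
  rcases Nat.even_or_odd n with he | ho
  · obtain ⟨m, rfl⟩ : 2 ∣ n := he.two_dvd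
    have hm : Odd m := by
      rcases Nat.even_or_odd m with hm | hm
      · obtain ⟨k, rfl⟩ := hm.two_dvd
        exact absurd ⟨k, by ring⟩ h4
      · exact hm
    have hm0 : m ≠ 0 := by rintro rfl; exact hn rfl
    apply X_pow_mul_sub_C_irreducible (n := 2) (m := m)
    · exact X_pow_sub_C_irreducible_of_odd hm
        (fun p hp hpn => ha p hp (hpn.mul_left 2))
    · intro E _ _ x hx
      have hint : IsIntegral K x := not_not.mp fun h ↦ by
        simpa only [degree_zero, degree_X_pow_sub_C (Nat.pos_of_ne_zero hm0),
          WithBot.natCast_ne_bot] using congr_arg degree (hx.symm.trans (dif_neg h))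
      apply X_pow_sub_C_irreducible_of_prime Nat.prime_two
      intro b hb
      apply ha 2 Nat.prime_two ⟨m, rfl⟩ (Algebra.norm _ b)
      rw [← map_pow, hb, ← IntermediateField.adjoin.powerBasis_gen hint,
        Algebra.PowerBasis.norm_gen_eq_coeff_zero_minpoly]
      simp [IntermediateField.minpoly_gen, hx, hm0, Ne.symm hm0, hm.neg_pow]
  · exact X_pow_sub_C_irreducible_of_odd ho ha

theorem stmt13 (q d : ℕ) (hd : 2 ≤ d) (hd4 : ¬ (4 ∣ d))
    (F : Type*) [Field F] [Fintype F] (hF : Fintype.card F = q)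
    (a b c : F) (ha : a ≠ 0) (hc : c ≠ 0) (hb : b = c ^ (∏ p ∈ d.primeFactors, p)) :
    Irreducible (X ^ d - C a : F[X]) ↔ Irreducible (X ^ d - C (a * b) : F[X]) := by
  have hd0 : d ≠ 0 := by omega
  have key : ∀ (a b c : F), a ≠ 0 → c ≠ 0 → b = c ^ (∏ p ∈ d.primeFactors, p) →
      Irreducible (X ^ d - C a : F[X]) → Irreducible (X ^ d - C (a * b) : F[X]) := by
    intro a b c ha hc hb H
    apply my_X_pow_sub_C_irreducible_of_not_four_dvd hd0 hd4
    intro p hp hpd z hz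
    have hpmem : p ∈ d.primeFactors := Nat.mem_primeFactors.2 ⟨hp, hpd, hd0⟩
    obtain ⟨k, hk⟩ := Finset.dvd_prod_of_mem id hpmem
    have hck : (c ^ k : F) ≠ 0 := pow_ne_zero _ hc
    simp only [id] at hk
    have hbk : (c ^ k) ^ p = b := by
      rw [hb, hk, ← pow_mul, mul_comm]
    have : (z * (c ^ k)⁻¹) ^ p = a := by
      rw [mul_pow, hz, hbk.symm] at *
      field_simp [hz]
      rw [← mul_pow, mul_one_div_cancel hck, one_pow]
    exact pow_ne_of_irreducible_X_pow_sub_C H hpd hp.ne_one _ this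
  have hb0 : b ≠ 0 := by
    rw [hb]; exact pow_ne_zero _ hc
  constructor
  · exact key a b c ha hc hb
  · intro H
    have := key (a * b) b⁻¹ c⁻¹ (mul_ne_zero ha hb0) (inv_ne_zero hc)
      (by rw [hb, inv_pow]) H
    rwa [mul_assoc, mul_inv_cancel₀ hb0, mul_one] at this
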